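/- Let G = (V,E) be a connected graph with n = |V| > 4 nodes. Let φ* be the minimum sparsest cut score of G and assume each side of an optimal sparsest cut partition has at least 2 nodes. Let γ > 0 and λ ∈ (0,1), define c_ij = 1 if (i,j) ∈ E and 0 otherwise, and w_ij = 1 if (i,j) ∈ E and λ otherwise. Let 𝒜 denote the feasible set of the Leighton–Rao sparsest cut LP relaxation: vectors x = (x_ij) on pairs of distinct nodes with Σ_{i<j} x_ij = n, x_ij ≤ x_ik + x_jk for all triples of distinct nodes, and x_ij ≥ 0 for all pairs. Then the minimum over x ∈ 𝒜 of Σ_{i<j} c_ij x_ij + (1/(2γ)) Σ_{i<j} w_ij x_ij² is at most (1 + (1 + λn)/(2γ)) φ*. -/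

import Mathlib

open Finset

/-- The set of ordered pairs `(i,j)` with `i < j`, used to index unordered
pairs of distinct nodes. -/
def pairsFin (n : ℕ) : Finset (Fin n × Fin n) :=
  Finset.univ.filter (fun p => p.1 < p.2)

/-- `cut(S)`: the number of edges of `G` with exactly one endpoint in `S`. -/
def cutFin {n : ℕ} (G : SimpleGraph (Fin n)) [DecidableRel G.Adj]
    (S : Finset (Fin n)) : ℕ :=
  ((pairsFin n).filter (fun p => G.Adj p.1 p.2 ∧
    ((p.1 ∈ S ∧ p.2 ∉ S) ∨ (p.1 ∉ S ∧ p.2 ∈ S)))).card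

/-- Feasibility for the Leighton–Rao sparsest cut LP relaxation: symmetric,
nonnegative, triangle inequalities, entries summing (over `i<j`) to `n`. -/
def lrFeas {n : ℕ} (x : Fin n → Fin n → ℝ) : Prop :=
  (∀ i j, x i j = x j i) ∧
  (∀ i j : Fin n, i ≠ j → 0 ≤ x i j) ∧
  (∀ i j k : Fin n, i ≠ j → i ≠ k → j ≠ k → x i j ≤ x i k + x j k) ∧
  (∑ p ∈ pairsFin n, x p.1 p.2 = (n : ℝ))

/-! ### Auxiliary definitions and lemmas -/

/-- The "separated" condition for a pair of nodes. -/
def sepCond {n : ℕ} (S : Finset (Fin n)) (p : Fin n × Fin n) : Prop :=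
  (p.1 ∈ S ∧ p.2 ∉ S) ∨ (p.1 ∉ S ∧ p.2 ∈ S)

instance {n : ℕ} (S : Finset (Fin n)) : DecidablePred (sepCond S) := fun p => by
  unfold sepCond; infer_instance

/-- The cut (pseudo)metric scaled by `α`. -/
def cutVec {n : ℕ} (S : Finset (Fin n)) (α : ℝ) : Fin n → Fin n → ℝ :=
  fun i j => if sepCond S (i, j) then α else 0

lemma mem_pairsFin {n : ℕ} (p : Fin n × Fin n) : p ∈ pairsFin n ↔ p.1 < p.2 := by
  simp [pairsFin]

lemma sepcard {n : ℕ} (S : Finset (Fin n)) :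
    ((pairsFin n).filter (sepCond S)).card = S.card * Sᶜ.card := by
  rw [← Finset.card_product]
  apply Finset.card_nbij' (fun p => if p.1 ∈ S then p else p.swap)
    (fun q => if q.1 < q.2 then q else q.swap)
  · intro p hp
    simp only [Finset.mem_coe, Finset.mem_filter, mem_pairsFin] at hp
    obtain ⟨hlt, hsep⟩ := hp
    rcases hsep with ⟨h1, h2⟩ | ⟨h1, h2⟩
    · simp [h1, h2, Finset.mem_product]
    · simp [h1, h2, Finset.mem_product, Prod.swap]
  · intro q hq
    simp only [Finset.mem_coe, Finset.mem_product, Finset.mem_compl] at hq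
    have hne : q.1 ≠ q.2 := fun h => hq.2 (h ▸ hq.1)
    rcases lt_or_gt_of_ne hne with h | h
    · simp only [h, if_pos]
      simp [Finset.mem_filter, mem_pairsFin, h, sepCond, hq.1, hq.2]
    · simp only [not_lt_of_gt h, if_neg, Prod.swap]
      simp [Finset.mem_filter, mem_pairsFin, h, sepCond, hq.1, hq.2]
  · intro p hp
    simp only [Finset.mem_coe, Finset.mem_filter, mem_pairsFin] at hp
    obtain ⟨hlt, hsep⟩ := hp
    by_cases h1 : p.1 ∈ S
    · simp [h1, hlt]
    · simp [h1, Prod.swap, not_lt_of_gt hlt]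
  · intro q hq
    simp only [Finset.mem_coe, Finset.mem_product, Finset.mem_compl] at hq
    have hne : q.1 ≠ q.2 := fun h => hq.2 (h ▸ hq.1)
    rcases lt_or_gt_of_ne hne with h | h
    · simp [h, hq.1]
    · simp [not_lt_of_gt h, Prod.swap, hq.1, hq.2]

lemma cutVec_feas {n : ℕ} (S : Finset (Fin n)) (α : ℝ) (hα : 0 ≤ α)
    (hsum : ∑ p ∈ pairsFin n, cutVec S α p.1 p.2 = (n : ℝ)) :
    lrFeas (cutVec S α) := by
  refine ⟨?_, ?_, ?_, hsum⟩
  · intro i j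
    by_cases hi : i ∈ S <;> by_cases hj : j ∈ S <;> simp [cutVec, sepCond, hi, hj]
  · intro i j _
    unfold cutVec
    split_ifs <;> simp [hα]
  · intro i j k _ _ _
    by_cases hi : i ∈ S <;> by_cases hj : j ∈ S <;> by_cases hk : k ∈ S <;>
      simp [cutVec, sepCond, hi, hj, hk, hα]

lemma cutFin_eq_card_filter {n : ℕ} (G : SimpleGraph (Fin n)) [DecidableRel G.Adj]
    (S : Finset (Fin n)) :
    cutFin G S
      = (((pairsFin n).filter (sepCond S)).filter (fun p => G.Adj p.1 p.2)).card := by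
  rw [cutFin, Finset.filter_filter]
  congr 1
  apply Finset.filter_congr
  intro p _
  unfold sepCond
  tauto

lemma sum_c_cutVec {n : ℕ} (G : SimpleGraph (Fin n)) [DecidableRel G.Adj]
    (S : Finset (Fin n)) (α : ℝ) (c : Fin n → Fin n → ℝ)
    (hc : ∀ i j, c i j = if G.Adj i j then 1 else 0) :
    ∑ p ∈ pairsFin n, c p.1 p.2 * cutVec S α p.1 p.2
      = (cutFin G S : ℝ) * α := by
  have h : ∀ p ∈ pairsFin n, c p.1 p.2 * cutVec S α p.1 p.2
      = if (sepCond S p ∧ G.Adj p.1 p.2) then α else 0 := by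
    intro p _
    by_cases hA : G.Adj p.1 p.2 <;> by_cases hS : sepCond S p <;>
      simp [hc, cutVec, hA, hS]
  rw [Finset.sum_congr rfl h, ← Finset.sum_filter, Finset.sum_const,
    nsmul_eq_mul, cutFin_eq_card_filter]
  congr 1
  rw [← Finset.filter_filter]

lemma sum_w_cutVec {n : ℕ} (G : SimpleGraph (Fin n)) [DecidableRel G.Adj]
    (S : Finset (Fin n)) (α lam : ℝ) (hlam : 0 < lam)
    (w : Fin n → Fin n → ℝ)
    (hw : ∀ i j, w i j = if G.Adj i j then 1 else lam) :
    ∑ p ∈ pairsFin n, w p.1 p.2 * (cutVec S α p.1 p.2) ^ 2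
      ≤ (cutFin G S : ℝ) * α ^ 2
        + lam * ((S.card : ℝ) * (Sᶜ.card : ℝ)) * α ^ 2 := by
  have h : ∀ p ∈ pairsFin n, w p.1 p.2 * (cutVec S α p.1 p.2) ^ 2
      = if sepCond S p then (if G.Adj p.1 p.2 then α ^ 2 else lam * α ^ 2) else 0 := by
    intro p _
    by_cases hA : G.Adj p.1 p.2 <;> by_cases hS : sepCond S p <;>
      simp [hw, cutVec, hA, hS]
  rw [Finset.sum_congr rfl h, ← Finset.sum_filter, Finset.sum_ite,
    Finset.sum_const, Finset.sum_const, nsmul_eq_mul, nsmul_eq_mul,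
    ← cutFin_eq_card_filter]
  have h2 : ((((pairsFin n).filter (sepCond S)).filter (fun p => ¬ G.Adj p.1 p.2)).card : ℝ)
      ≤ (S.card : ℝ) * (Sᶜ.card : ℝ) := by
    have hle := Finset.card_filter_le ((pairsFin n).filter (sepCond S))
      (fun p => ¬ G.Adj p.1 p.2)
    have hs := sepcard S
    rw [hs] at hle
    exact_mod_cast hle
  nlinarith [sq_nonneg α, mul_nonneg (le_of_lt hlam) (sq_nonneg α)]

lemma one_le_cutFin {n : ℕ} (G : SimpleGraph (Fin n)) [DecidableRel G.Adj]
    (hconn : G.Connected) (S : Finset (Fin n)) (hne : S.Nonempty)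
    (hcne : Sᶜ.Nonempty) : 1 ≤ cutFin G S := by
  obtain ⟨a, ha⟩ := hne
  obtain ⟨b, hb⟩ := hcne
  have hbS : b ∉ S := Finset.mem_compl.mp hb
  obtain ⟨wk⟩ := hconn.preconnected a b
  obtain ⟨d, _, hd1, hd2⟩ := wk.exists_boundary_dart (↑S : Set (Fin n))
    (by simpa using ha) (by simpa using hbS)
  have hadj : G.Adj d.fst d.snd := d.adj
  have hd1' : d.fst ∈ S := by simpa using hd1
  have hd2' : d.snd ∉ S := by simpa using hd2
  rw [cutFin]
  rcases lt_or_gt_of_ne hadj.ne with h | h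
  · refine Nat.one_le_iff_ne_zero.mpr (Finset.card_ne_zero_of_mem (a := (d.fst, d.snd)) ?_)
    simp only [Finset.mem_filter, mem_pairsFin]
    exact ⟨h, hadj, Or.inl ⟨hd1', hd2'⟩⟩
  · refine Nat.one_le_iff_ne_zero.mpr (Finset.card_ne_zero_of_mem (a := (d.snd, d.fst)) ?_)
    simp only [Finset.mem_filter, mem_pairsFin]
    exact ⟨h, hadj.symm, Or.inr ⟨hd2', hd1'⟩⟩

set_option maxHeartbeats 1000000 in
theorem stmt7 {n : ℕ} (G : SimpleGraph (Fin n)) [DecidableRel G.Adj]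
    (hconn : G.Connected) (hn : 4 < n)
    (φ : Finset (Fin n) → ℝ)
    (hφ : ∀ S : Finset (Fin n),
      φ S = (n : ℝ) * (cutFin G S : ℝ) / ((S.card : ℝ) * (Sᶜ.card : ℝ)))
    (φstar : ℝ)
    (Sstar : Finset (Fin n)) (hS_ne : Sstar.Nonempty)
    (hS_proper : Sstar ≠ Finset.univ)
    (hφstar : φstar = φ Sstar)
    (hS_opt : ∀ S : Finset (Fin n), S.Nonempty → S ≠ Finset.univ → φstar ≤ φ S)
    (hS_two : 2 ≤ Sstar.card ∧ 2 ≤ Sstarᶜ.card)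
    (γ lam : ℝ) (hγ : 0 < γ) (hlam : 0 < lam ∧ lam < 1)
    (c w : Fin n → Fin n → ℝ)
    (hc : ∀ i j, c i j = if G.Adj i j then 1 else 0)
    (hw : ∀ i j, w i j = if G.Adj i j then 1 else lam)
    (xh : Fin n → Fin n → ℝ) (hxh_feas : lrFeas xh)
    (hxh_opt : ∀ x : Fin n → Fin n → ℝ, lrFeas x →
      (∑ p ∈ pairsFin n, c p.1 p.2 * xh p.1 p.2)
          + (1 / (2 * γ)) * ∑ p ∈ pairsFin n, w p.1 p.2 * (xh p.1 p.2) ^ 2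
        ≤ (∑ p ∈ pairsFin n, c p.1 p.2 * x p.1 p.2)
          + (1 / (2 * γ)) * ∑ p ∈ pairsFin n, w p.1 p.2 * (x p.1 p.2) ^ 2) :
    (∑ p ∈ pairsFin n, c p.1 p.2 * xh p.1 p.2)
        + (1 / (2 * γ)) * ∑ p ∈ pairsFin n, w p.1 p.2 * (xh p.1 p.2) ^ 2
      ≤ (1 + (1 + lam * n) / (2 * γ)) * φstar := by
  obtain ⟨hlam_pos, hlam_lt⟩ := hlam
  obtain ⟨hs2, ht2⟩ := hS_two
  have hst : Sstar.card + Sstarᶜ.card = n := by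
    simpa using Finset.card_add_card_compl Sstar
  set s : ℕ := Sstar.card with hs
  set t : ℕ := Sstarᶜ.card with ht
  have hPn : n ≤ s * t := hst ▸ add_le_mul hs2 ht2
  have hP0 : (0 : ℝ) < (s : ℝ) * (t : ℝ) := by
    have : 0 < s * t := by positivity
    exact_mod_cast this
  set α : ℝ := (n : ℝ) / ((s : ℝ) * (t : ℝ)) with hαdef
  have hn0 : (0 : ℝ) < (n : ℝ) := by exact_mod_cast (by omega : 0 < n)
  have hα0 : 0 < α := div_pos hn0 hP0
  have hαP : α * ((s : ℝ) * (t : ℝ)) = (n : ℝ) := by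
    rw [hαdef, div_mul_cancel₀ _ hP0.ne']
  have hα1 : α ≤ 1 := by
    rw [hαdef, div_le_one hP0]
    exact_mod_cast hPn
  have hsum : ∑ p ∈ pairsFin n, cutVec Sstar α p.1 p.2 = (n : ℝ) := by
    have h : ∀ p ∈ pairsFin n, cutVec Sstar α p.1 p.2
        = if sepCond Sstar p then α else 0 := fun p _ => rfl
    rw [Finset.sum_congr rfl h, ← Finset.sum_filter, Finset.sum_const,
      nsmul_eq_mul, sepcard, ← hs, ← ht]
    push_cast
    rw [mul_comm]
    exact hαP
  have hfeas := cutVec_feas Sstar α hα0.le hsum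
  have hbound := hxh_opt _ hfeas
  have hcut1 : (1 : ℝ) ≤ (cutFin G Sstar : ℝ) := by
    have := one_le_cutFin G hconn Sstar hS_ne
      (Finset.card_pos.mp (by omega : 0 < Sstarᶜ.card))
    exact_mod_cast this
  set C : ℝ := (cutFin G Sstar : ℝ) with hC
  have hφval : φstar = C * α := by
    rw [hφstar, hφ, ← hs, ← ht, hαdef, hC]
    ring
  have h1 := sum_c_cutVec G Sstar α c hc
  have h2 := sum_w_cutVec G Sstar α lam hlam_pos w hw
  have hg : (0 : ℝ) < 1 / (2 * γ) := by positivity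
  calc (∑ p ∈ pairsFin n, c p.1 p.2 * xh p.1 p.2)
        + (1 / (2 * γ)) * ∑ p ∈ pairsFin n, w p.1 p.2 * (xh p.1 p.2) ^ 2
      ≤ (∑ p ∈ pairsFin n, c p.1 p.2 * cutVec Sstar α p.1 p.2)
        + (1 / (2 * γ)) * ∑ p ∈ pairsFin n, w p.1 p.2 * (cutVec Sstar α p.1 p.2) ^ 2 :=
        hbound
    _ ≤ C * α + (1 / (2 * γ)) * (C * α ^ 2 + lam * ((s : ℝ) * (t : ℝ)) * α ^ 2) := by
        rw [h1, ← hC]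
        rw [← hC, ← hs, ← ht] at h2
        have := mul_le_mul_of_nonneg_left h2 hg.le
        linarith
    _ ≤ (1 + (1 + lam * n) / (2 * γ)) * φstar := by
        rw [hφval]
        have key : C * α ^ 2 + lam * ((s : ℝ) * (t : ℝ)) * α ^ 2
            ≤ C * α + lam * (n : ℝ) * (C * α) := by
          have hC0 : (0 : ℝ) ≤ C := by linarith
          have e1 : C * α ^ 2 ≤ C * α := by
            nlinarith [mul_nonneg (mul_nonneg hC0 hα0.le) (sub_nonneg.mpr hα1)]
          have e2 : lam * ((s : ℝ) * (t : ℝ)) * α ^ 2 = lam * (n : ℝ) * α := by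
            rw [sq, ← hαP]; ring
          have e3 : lam * (n : ℝ) * α ≤ lam * (n : ℝ) * (C * α) := by
            nlinarith [mul_nonneg (mul_nonneg (mul_nonneg hlam_pos.le hn0.le) hα0.le)
              (sub_nonneg.mpr hcut1)]
          linarith [e2 ▸ e3]
        have expand : (1 + (1 + lam * n) / (2 * γ)) * (C * α)
            = C * α + (1 / (2 * γ)) * (C * α + lam * (n : ℝ) * (C * α)) := by
          field_simp
        rw [expand]
        nlinarith [key, hg]
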